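/- arXiv:2510.13007 — 3 statements merged into one kernel-verified Lean document; each statement's English description precedes it below -/
import Mathlib

section
/- Let M be a monoid and let r, r_ss, r_bs, r_sb, t₁, t₂, k₁, k₂ be elements of M, and let σ₁, σ₂ be invertible elements of M. Assume the following identities hold in M: (RTT) r·t₁·t₂ = t₂·t₁·r; (RTT') σ₂⁻¹·r_bs·t₁ = t₁·r_bs·σ₂⁻¹; (RTT'') σ₁⁻¹·r_sb·t₂ = t₂·r_sb·σ₁⁻¹; (RTT''') r_ss·σ₁⁻¹·σ₂⁻¹ = σ₂⁻¹·σ₁⁻¹·r_ss; (commutation of distinct tensor legs) k₁·σ₂ = σ₂·k₁, k₁·t₂ = t₂·k₁, k₂·σ₁ = σ₁·k₂, k₂·t₁ = t₁·k₂; and the reflection equation k₂·r_sb·k₁·r = r_ss·k₁·r_bs·k₂. Then the conjugated elements s̃₁ := σ₁⁻¹·k₁·t₁ and s̃₂ := σ₂⁻¹·k₂·t₂ again satisfy the reflection equation: s̃₂·r_sb·s̃₁·r = r_ss·s̃₁·r_bs·s̃₂. -/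
private lemma aux3 {M : Type*} [Monoid M] {a b c d e f : M}
    (h : a * b * c = d * e * f) (x : M) :
    a * (b * (c * x)) = d * (e * (f * x)) := by
  simp only [← mul_assoc, h]

private lemma aux4 {M : Type*} [Monoid M] {a b c d e f g i : M}
    (h : a * b * c * d = e * f * g * i) (x : M) :
    a * (b * (c * (d * x))) = e * (f * (g * (i * x))) := by
  simp only [← mul_assoc, h]

/-- If `{S_F(u)}` solves the reflection equation, then so does
`T_{F^σ}(−u)⁻¹ · S_F(u) · T_F(u)`, formalized abstractly in a monoid. -/
theorem conjugated_reflection_equation {M : Type*} [Monoid M]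
    (r r_ss r_bs r_sb t₁ t₂ k₁ k₂ : M) (σ₁ σ₂ : Mˣ)
    (hRTT : r * t₁ * t₂ = t₂ * t₁ * r)
    (hRTT' : (↑σ₂⁻¹ : M) * r_bs * t₁ = t₁ * r_bs * (↑σ₂⁻¹ : M))
    (hRTT'' : (↑σ₁⁻¹ : M) * r_sb * t₂ = t₂ * r_sb * (↑σ₁⁻¹ : M))
    (hRTT''' : r_ss * (↑σ₁⁻¹ : M) * (↑σ₂⁻¹ : M) = (↑σ₂⁻¹ : M) * (↑σ₁⁻¹ : M) * r_ss)
    (hc₁ : k₁ * (↑σ₂ : M) = (↑σ₂ : M) * k₁)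
    (hc₂ : k₁ * t₂ = t₂ * k₁)
    (hc₃ : k₂ * (↑σ₁ : M) = (↑σ₁ : M) * k₂)
    (hc₄ : k₂ * t₁ = t₁ * k₂)
    (hrefl : k₂ * r_sb * k₁ * r = r_ss * k₁ * r_bs * k₂) :
    ((↑σ₂⁻¹ : M) * k₂ * t₂) * r_sb * ((↑σ₁⁻¹ : M) * k₁ * t₁) * r =
      r_ss * ((↑σ₁⁻¹ : M) * k₁ * t₁) * r_bs * ((↑σ₂⁻¹ : M) * k₂ * t₂) := by
  have hc₁' : (↑σ₂⁻¹ : M) * k₁ = k₁ * (↑σ₂⁻¹ : M) := by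
    have := congrArg (fun x => (↑σ₂⁻¹ : M) * x * (↑σ₂⁻¹ : M)) hc₁
    simpa [mul_assoc] using this
  have hc₃' : k₂ * (↑σ₁⁻¹ : M) = (↑σ₁⁻¹ : M) * k₂ := by
    have := congrArg (fun x => (↑σ₁⁻¹ : M) * x * (↑σ₁⁻¹ : M)) hc₃
    simpa [mul_assoc] using this.symm
  simp only [mul_assoc]
  rw [aux3 hRTT''.symm, ← mul_assoc k₂, hc₃', mul_assoc,
      ← mul_assoc t₂ k₁, ← hc₂, mul_assoc k₁,
      ← mul_assoc t₂ t₁ r, hRTT.symm, mul_assoc r t₁ t₂, aux4 hrefl,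
      aux3 hRTT'''.symm,
      ← mul_assoc k₂ t₁, hc₄, mul_assoc t₁,
      ← mul_assoc _ k₁, hc₁', mul_assoc k₁,
      aux3 hRTT']
end

section
/- Fix ℓ ≥ 1 and work with ℓ²×ℓ² matrices over a commutative ring R containing an element ħ, with rows and columns indexed by pairs (a,b) ∈ {1,…,ℓ}². Let P be the flip matrix, P_{(a,b),(c,d)} = 1 if a = d and b = c and 0 otherwise; let J be the ℓ×ℓ exchange matrix, J_{ij} = 1 if i + j = ℓ + 1 and 0 otherwise; set J₁ = J ⊗ 1_ℓ and J₂ = 1_ℓ ⊗ J (Kronecker products), and let R(w) = w·1 − ħ·P for a scalar w (Yang's R-matrix in polynomial form). Then for all u₁, u₂ ∈ R the reflection equation J₂ · R(u₁+u₂) · J₁ · R(u₁−u₂) = R(u₁−u₂) · J₁ · R(u₁+u₂) · J₂ holds. -/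
open Kronecker

/-- The flip (permutation) matrix `P` on `R^ℓ ⊗ R^ℓ`:
`P_{(a,b),(c,d)} = 1` if `a = d` and `b = c`, and `0` otherwise. -/
def flipP (R : Type*) [CommRing R] (ℓ : ℕ) :
    Matrix (Fin ℓ × Fin ℓ) (Fin ℓ × Fin ℓ) R :=
  Matrix.of fun p q => if p.1 = q.2 ∧ p.2 = q.1 then 1 else 0

/-- The `ℓ×ℓ` exchange matrix `J`: `J_{ij} = 1` if `i + j = ℓ + 1` (1-based
indexing), and `0` otherwise. -/
def exchJ (R : Type*) [CommRing R] (ℓ : ℕ) : Matrix (Fin ℓ) (Fin ℓ) R :=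
  Matrix.of fun i j => if ((i : ℕ) + 1) + ((j : ℕ) + 1) = ℓ + 1 then 1 else 0

section pm
variable (R : Type*) [CommRing R] {n : Type*} [DecidableEq n] [Fintype n]

def pm (f : n → n) : Matrix n n R :=
  Matrix.of fun p q => if q = f p then 1 else 0

lemma pm_mul (f g : n → n) : pm R f * pm R g = pm R (g ∘ f) := by
  ext p q
  rw [Matrix.mul_apply]
  rw [Finset.sum_eq_single (f p)]
  · simp [pm]
  · intro b _ hb'; simp [pm, hb']
  · intro h; exact absurd (Finset.mem_univ _) h

lemma pm_id : pm R (id : n → n) = 1 := by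
  ext p q
  simp [pm, Matrix.one_apply, eq_comm]

end pm

section eqs
variable (R : Type*) [CommRing R] (ℓ : ℕ)

lemma exchJ_eq : exchJ R ℓ = pm R Fin.rev := by
  ext i j
  simp only [exchJ, pm, Matrix.of_apply]
  congr 1
  have hi := i.isLt
  have hj := j.isLt
  rw [eq_iff_iff, Fin.ext_iff, Fin.val_rev]
  omega

lemma flipP_eq : flipP R ℓ = pm R Prod.swap := by
  ext p q
  simp only [flipP, pm, Matrix.of_apply, Prod.ext_iff, Prod.fst_swap, Prod.snd_swap]
  congr 1
  rw [eq_iff_iff]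
  constructor <;> rintro ⟨h1, h2⟩ <;> exact ⟨h2.symm, h1.symm⟩

lemma kron_one (f : Fin ℓ → Fin ℓ) :
    (pm R f) ⊗ₖ (1 : Matrix (Fin ℓ) (Fin ℓ) R) =
      pm R (fun p : Fin ℓ × Fin ℓ => (f p.1, p.2)) := by
  ext p q
  simp only [Matrix.kroneckerMap_apply, pm, Matrix.of_apply, Matrix.one_apply, Prod.ext_iff]
  simp only [@eq_comm _ p.2 q.2, ite_and, ite_mul, one_mul, zero_mul]

lemma one_kron (f : Fin ℓ → Fin ℓ) :
    (1 : Matrix (Fin ℓ) (Fin ℓ) R) ⊗ₖ (pm R f) =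
      pm R (fun p : Fin ℓ × Fin ℓ => (p.1, f p.2)) := by
  ext p q
  simp only [Matrix.kroneckerMap_apply, pm, Matrix.of_apply, Matrix.one_apply, Prod.ext_iff]
  simp only [@eq_comm _ p.1 q.1, ite_and, mul_ite, mul_one, mul_zero]
  by_cases h : q.1 = p.1 <;> simp [h]

end eqs

/-- with `J₁ = J ⊗ 1`, `J₂ = 1 ⊗ J` and Yang's R-matrix
`R(w) = w·1 − ħ·P` in polynomial form, the reflection equation
`J₂·R(u₁+u₂)·J₁·R(u₁−u₂) = R(u₁−u₂)·J₁·R(u₁+u₂)·J₂` holds. -/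
theorem reflection_equation_exchange (R : Type*) [CommRing R] (ℓ : ℕ) (hℓ : 1 ≤ ℓ)
    (hb : R) (u₁ u₂ : R) :
    letI J₁ : Matrix (Fin ℓ × Fin ℓ) (Fin ℓ × Fin ℓ) R :=
      exchJ R ℓ ⊗ₖ (1 : Matrix (Fin ℓ) (Fin ℓ) R)
    letI J₂ : Matrix (Fin ℓ × Fin ℓ) (Fin ℓ × Fin ℓ) R :=
      (1 : Matrix (Fin ℓ) (Fin ℓ) R) ⊗ₖ exchJ R ℓ
    letI Rm : R → Matrix (Fin ℓ × Fin ℓ) (Fin ℓ × Fin ℓ) R :=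
      fun w => w • (1 : Matrix (Fin ℓ × Fin ℓ) (Fin ℓ × Fin ℓ) R) - hb • flipP R ℓ
    J₂ * Rm (u₁ + u₂) * J₁ * Rm (u₁ - u₂) =
      Rm (u₁ - u₂) * J₁ * Rm (u₁ + u₂) * J₂ := by
  simp only [exchJ_eq, flipP_eq, kron_one, one_kron]
  simp only [Matrix.mul_sub, Matrix.sub_mul, Matrix.mul_smul, Matrix.smul_mul,
    Matrix.mul_one, Matrix.one_mul, pm_mul, smul_smul]
  simp only [Function.comp_def, Prod.swap, Fin.rev_rev, Prod.fst, Prod.snd]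
  module
end

section
/- Fix ℓ ≥ 2 and w₁ ≥ 1, and encode a symplectic-type Young tableau by a function f : {1,…,w₁} → {1,…,ℓ}. Then there is no triple (k,l,a) with l ≠ k satisfying condition (28) if and only if f(k) = 1 for every k ∈ {1,…,w₁}; consequently the charge satisfies l_Sp(T) = 0 if and only if f ≡ 1, and there is exactly one tableau of charge zero. -/
/-- Number of columns of the row `k` of the tableau: rows `k > 0` have one
node, rows `k < 0` have `ℓ − 1` nodes. -/
def numCols (ℓ : ℕ) (k : ℤ) : ℕ := if 0 < k then 1 else ℓ - 1

/-- The entry `T(k,a)` of the tableau encoded by `f`: for `k > 0` the single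
entry of row `k` is `f(k)`; for `k < 0` row `k` is the increasing enumeration
of `{1,…,ℓ} \ {f(−k)}`, whose `a`-th entry is `a` if `a < f(−k)` and `a + 1`
otherwise. -/
def entryT (f : ℤ → ℕ) (k : ℤ) (a : ℕ) : ℕ :=
  if 0 < k then f k else if a < f (-k) then a else a + 1

/-- `k` indexes a row of the tableau: `k ∈ {−w₁,…,−1,1,…,w₁}`. -/
def IsRow (w₁ : ℕ) (k : ℤ) : Prop := k ≠ 0 ∧ |k| ≤ (w₁ : ℤ)

/-- Condition (28) of the paper for the triple `(k, l, a)`: `k`, `l` are rows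
with `l ≠ k`, `a` is a column of row `k`, `T(l,a) < T(k,a)` when `l < k`,
`T(l,a+1) < T(k,a)` when `l > k` (failing if row `l` has no node in column
`a+1`), and the entry `T(k,a)` does not appear in row `l`. -/
def Cond28 (ℓ w₁ : ℕ) (f : ℤ → ℕ) (k l : ℤ) (a : ℕ) : Prop :=
  IsRow w₁ k ∧ IsRow w₁ l ∧ l ≠ k ∧ 1 ≤ a ∧ a ≤ numCols ℓ k ∧
  (l < k → entryT f l a < entryT f k a) ∧
  (k < l → a + 1 ≤ numCols ℓ l ∧ entryT f l (a + 1) < entryT f k a) ∧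
  (∀ b : ℕ, 1 ≤ b → b ≤ numCols ℓ l → entryT f l b ≠ entryT f k a)

/-- The charge `l_Sp(T)`: the number of triples `(k, −k, a)` satisfying (28)
plus half the number of triples `(k, l, a)` with `l ≠ ±k` satisfying (28). -/
noncomputable def lSp (ℓ w₁ : ℕ) (f : ℤ → ℕ) : ℕ :=
  {p : ℤ × ℕ | Cond28 ℓ w₁ f p.1 (-p.1) p.2}.ncard +
    {p : ℤ × ℤ × ℕ | p.2.1 ≠ -p.1 ∧ Cond28 ℓ w₁ f p.1 p.2.1 p.2.2}.ncard / 2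

lemma no_cond28 (ℓ w₁ : ℕ) (f : ℤ → ℕ)
    (h1 : ∀ k : ℤ, 1 ≤ k → k ≤ (w₁ : ℤ) → f k = 1)
    (k l : ℤ) (a : ℕ) : ¬ Cond28 ℓ w₁ f k l a := by
  rintro ⟨⟨hk0, hkw⟩, ⟨hl0, hlw⟩, hlk, ha1, ha2, hlt, hgt, hne⟩
  rcases lt_or_gt_of_ne hk0 with hk | hk
  · rcases lt_or_gt_of_ne hl0 with hl | hl
    · -- k < 0, l < 0
      have hfk : f (-k) = 1 := h1 (-k) (by omega) (by rw [abs_of_neg hk] at hkw; omega)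
      have hfl : f (-l) = 1 := h1 (-l) (by omega) (by rw [abs_of_neg hl] at hlw; omega)
      have ek : entryT f k a = a + 1 := by
        rw [entryT, if_neg (by omega), hfk, if_neg (by omega)]
      have el : entryT f l a = a + 1 := by
        rw [entryT, if_neg (by omega), hfl, if_neg (by omega)]
      have el' : entryT f l (a + 1) = a + 2 := by
        rw [entryT, if_neg (by omega), hfl, if_neg (by omega)]
      rcases hlk.lt_or_gt with h | h
      · have := hlt h; omega
      · have := (hgt h).2; omega
    · -- k < 0, l > 0
      have := (hgt (by omega)).1
      rw [numCols, if_pos hl] at this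
      omega
  · have hfk : f k = 1 := h1 k (by omega) (by rw [abs_of_pos hk] at hkw; omega)
    have ek : entryT f k a = 1 := by rw [entryT, if_pos hk, hfk]
    rcases lt_or_gt_of_ne hl0 with hl | hl
    · -- k > 0, l < 0
      have el : a ≤ entryT f l a := by
        rw [entryT, if_neg (by omega)]; split <;> omega
      have := hlt (by omega)
      omega
    · -- k > 0, l > 0
      have hfl : f l = 1 := h1 l (by omega) (by rw [abs_of_pos hl] at hlw; omega)
      have el : entryT f l a = 1 := by rw [entryT, if_pos hl, hfl]
      have el' : entryT f l (a + 1) = 1 := by rw [entryT, if_pos hl, hfl]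
      rcases hlk.lt_or_gt with h | h
      · have := hlt h; omega
      · have := (hgt h).2; omega

lemma cond28_at (ℓ w₁ : ℕ) (f : ℤ → ℕ) (k₀ : ℤ)
    (h1 : 1 ≤ k₀) (h2 : k₀ ≤ (w₁ : ℤ)) (hf2 : 2 ≤ f k₀) :
    Cond28 ℓ w₁ f k₀ (-k₀) 1 := by
  have ek : entryT f k₀ 1 = f k₀ := by rw [entryT, if_pos (by omega)]
  have el : ∀ b : ℕ, entryT f (-k₀) b = if b < f k₀ then b else b + 1 := by
    intro b; rw [entryT, if_neg (by omega), neg_neg]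
  refine ⟨⟨by omega, by rw [abs_of_pos (by omega)]; omega⟩,
    ⟨by omega, by rw [abs_neg, abs_of_pos (by omega)]; omega⟩,
    by omega, le_rfl, by rw [numCols, if_pos (by omega)], ?_, ?_, ?_⟩
  · intro _
    rw [ek, el, if_pos (by omega)]
    omega
  · intro h; exact absurd h (by omega)
  · intro b hb1 hb2 heq
    rw [ek, el] at heq
    split_ifs at heq <;> omega

lemma setA_finite (ℓ w₁ : ℕ) (f : ℤ → ℕ) :
    {p : ℤ × ℕ | Cond28 ℓ w₁ f p.1 (-p.1) p.2}.Finite := by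
  apply Set.Finite.subset ((Set.finite_Icc (-(w₁ : ℤ)) (w₁ : ℤ)).prod
    (Set.finite_Iic (ℓ + 1)))
  rintro ⟨k, a⟩ ⟨⟨hk0, hkw⟩, _, _, _, ha2, _⟩
  dsimp only at ha2
  have hk' := abs_le.mp hkw
  have : numCols ℓ k ≤ ℓ + 1 := by rw [numCols]; split <;> omega
  exact ⟨Set.mem_Icc.mpr hk', Set.mem_Iic.mpr (by omega)⟩

lemma lSp_eq_zero (ℓ w₁ : ℕ) (f : ℤ → ℕ)
    (h1 : ∀ k : ℤ, 1 ≤ k → k ≤ (w₁ : ℤ) → f k = 1) : lSp ℓ w₁ f = 0 := by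
  have hA : {p : ℤ × ℕ | Cond28 ℓ w₁ f p.1 (-p.1) p.2} = ∅ :=
    Set.eq_empty_iff_forall_notMem.mpr fun p hp =>
      no_cond28 ℓ w₁ f h1 p.1 (-p.1) p.2 hp
  have hB : {p : ℤ × ℤ × ℕ | p.2.1 ≠ -p.1 ∧ Cond28 ℓ w₁ f p.1 p.2.1 p.2.2} = ∅ :=
    Set.eq_empty_iff_forall_notMem.mpr fun p hp =>
      no_cond28 ℓ w₁ f h1 p.1 p.2.1 p.2.2 hp.2
  rw [lSp, hA, hB]
  simp

lemma lSp_ne_zero (ℓ w₁ : ℕ) (f : ℤ → ℕ) (k₀ : ℤ)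
    (h1 : 1 ≤ k₀) (h2 : k₀ ≤ (w₁ : ℤ)) (hf2 : 2 ≤ f k₀) : lSp ℓ w₁ f ≠ 0 := by
  have hmem : (k₀, 1) ∈ {p : ℤ × ℕ | Cond28 ℓ w₁ f p.1 (-p.1) p.2} :=
    cond28_at ℓ w₁ f k₀ h1 h2 hf2
  have hpos : 0 < {p : ℤ × ℕ | Cond28 ℓ w₁ f p.1 (-p.1) p.2}.ncard :=
    (Set.ncard_pos (setA_finite ℓ w₁ f)).mpr ⟨_, hmem⟩
  rw [lSp]
  omega

/-- no triple `(k, l, a)` with `l ≠ k` satisfies condition (28)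
iff `f(k) = 1` for every `k ∈ {1,…,w₁}`; consequently `l_Sp(T) = 0` iff
`f ≡ 1`, and there is exactly one tableau of charge zero. -/
theorem charge_zero_iff_unique (ℓ w₁ : ℕ) (hℓ : 2 ≤ ℓ) (hw : 1 ≤ w₁)
    (f : ℤ → ℕ) (hf : ∀ k : ℤ, 1 ≤ k → k ≤ (w₁ : ℤ) → 1 ≤ f k ∧ f k ≤ ℓ) :
    ((¬ ∃ (k l : ℤ) (a : ℕ), Cond28 ℓ w₁ f k l a) ↔
      ∀ k : ℤ, 1 ≤ k → k ≤ (w₁ : ℤ) → f k = 1) ∧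
    (lSp ℓ w₁ f = 0 ↔ ∀ k : ℤ, 1 ≤ k → k ≤ (w₁ : ℤ) → f k = 1) ∧
    (∃ f₀ : ℤ → ℕ, (∀ k : ℤ, 1 ≤ k → k ≤ (w₁ : ℤ) → 1 ≤ f₀ k ∧ f₀ k ≤ ℓ) ∧
      lSp ℓ w₁ f₀ = 0 ∧
      ∀ f' : ℤ → ℕ, (∀ k : ℤ, 1 ≤ k → k ≤ (w₁ : ℤ) → 1 ≤ f' k ∧ f' k ≤ ℓ) →
        lSp ℓ w₁ f' = 0 →
        ∀ k : ℤ, 1 ≤ k → k ≤ (w₁ : ℤ) → f' k = f₀ k) := by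
  refine ⟨⟨?_, ?_⟩, ⟨?_, lSp_eq_zero ℓ w₁ f⟩, ?_⟩
  · intro hno k h1 h2
    by_contra hne
    exact hno ⟨k, -k, 1, cond28_at ℓ w₁ f k h1 h2 (by have := hf k h1 h2; omega)⟩
  · rintro h1 ⟨k, l, a, h⟩
    exact no_cond28 ℓ w₁ f h1 k l a h
  · intro hz k h1 h2
    by_contra hne
    exact lSp_ne_zero ℓ w₁ f k h1 h2 (by have := hf k h1 h2; omega) hz
  · refine ⟨fun _ => 1, fun k _ _ => ⟨le_rfl, show 1 ≤ ℓ by omega⟩,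
      lSp_eq_zero ℓ w₁ _ (fun _ _ _ => rfl), fun f' hf' hz k h1 h2 => ?_⟩
    show f' k = 1
    by_contra hne
    exact lSp_ne_zero ℓ w₁ f' k h1 h2 (by have := hf' k h1 h2; omega) hz
end
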